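/- Let m, d ≥ 1, let x_{kj} ∈ ℝ for 0 ≤ k ≤ m, 1 ≤ j ≤ n_k be finitely many data points with n = Σ_k n_k, let q : ℝ → ℝ^d, and let θ_1, …, θ_m ∈ ℝ^d with θ_0 = 0. Suppose ν_1, …, ν_m ∈ ℝ are such that the weights p̂_{kj} = n^{-1} { 1 + Σ_{s=1}^m ν_s [exp(θ_sᵀ q(x_{kj})) − 1] }^{-1} are all strictly positive and satisfy the constraints Σ_{k,j} p̂_{kj} exp(θ_rᵀ q(x_{kj})) = 1 for every r = 0, 1, …, m (the case r = 0 being Σ_{k,j} p̂_{kj} = 1). Then for any other weights p_{kj} > 0 satisfying the same constraints Σ_{k,j} p_{kj} exp(θ_rᵀ q(x_{kj})) = 1 for all r = 0, 1, …, m, one has Σ_{k,j} log p_{kj} ≤ Σ_{k,j} log p̂_{kj}. That is, p̂ maximizes Σ_{k,j} log p_{kj} over the constraint set. -/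

import Mathlib

/-- the profiling step of the empirical likelihood under the density ratio
model.  Weights `p̂_{kj} = n^{-1}{1 + Σ_s ν_s [exp(θ_sᵀ q(x_{kj})) - 1]}^{-1}` that are
positive and satisfy the constraints `Σ_{k,j} p̂_{kj} exp(θ_rᵀ q(x_{kj})) = 1` for all
`r = 0, 1, …, m` maximize `Σ_{k,j} log p_{kj}` among all positive weights satisfying the
same constraints.  Here `θ_0 = 0`, so the `r = 0` constraint is `Σ_{k,j} p_{kj} = 1`. -/
theorem el_profile_weights_maximize (m d : ℕ) (hm : 1 ≤ m) (hd : 1 ≤ d)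
    (n : Fin (m + 1) → ℕ) (hn : ∀ k, 0 < n k)
    (x : (k : Fin (m + 1)) → Fin (n k) → ℝ)
    (q : ℝ → Fin d → ℝ)
    (θ : Fin (m + 1) → Fin d → ℝ) (hθ0 : θ 0 = 0)
    (ν : Fin m → ℝ)
    (phat : (k : Fin (m + 1)) → Fin (n k) → ℝ)
    (hphat : ∀ k j, phat k j =
      ((∑ k', (n k' : ℝ)))⁻¹ *
        (1 + ∑ s : Fin m, ν s * (Real.exp (∑ i, θ s.succ i * q (x k j) i) - 1))⁻¹)
    (hphat_pos : ∀ k j, 0 < phat k j)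
    (hphat_constr : ∀ r : Fin (m + 1),
      ∑ k, ∑ j, phat k j * Real.exp (∑ i, θ r i * q (x k j) i) = 1)
    (p : (k : Fin (m + 1)) → Fin (n k) → ℝ)
    (hp_pos : ∀ k j, 0 < p k j)
    (hp_constr : ∀ r : Fin (m + 1),
      ∑ k, ∑ j, p k j * Real.exp (∑ i, θ r i * q (x k j) i) = 1) :
    ∑ k, ∑ j, Real.log (p k j) ≤ ∑ k, ∑ j, Real.log (phat k j) := by
  classical
  set N : ℝ := ∑ k', (n k' : ℝ) with hNdef
  have hNpos : 0 < N := by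
    apply Finset.sum_pos
    · intro k _; exact_mod_cast hn k
    · exact Finset.univ_nonempty
  set E : (k : Fin (m + 1)) → Fin (n k) → Fin m → ℝ :=
    fun k j s => Real.exp (∑ i, θ s.succ i * q (x k j) i) with hE
  set D : (k : Fin (m + 1)) → Fin (n k) → ℝ :=
    fun k j => 1 + ∑ s, ν s * (E k j s - 1) with hD
  have hphat' : ∀ k j, phat k j = N⁻¹ * (D k j)⁻¹ := fun k j => hphat k j
  have hDpos : ∀ k j, 0 < D k j := by
    intro k j
    have h := hphat_pos k j
    rw [hphat' k j] at h
    have hNi : 0 < N⁻¹ := inv_pos.mpr hNpos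
    rcases mul_pos_iff.mp h with ⟨_, h2⟩ | ⟨h1, _⟩
    · exact inv_pos.mp h2
    · linarith
  have hdiv : ∀ k j, p k j / phat k j = N * (p k j * D k j) := by
    intro k j
    rw [hphat' k j, div_eq_mul_inv, mul_inv, inv_inv, inv_inv]
    ring
  -- constraints for p
  have hp0 : ∑ k, ∑ j, p k j = 1 := by simpa [hθ0] using hp_constr 0
  have hps : ∀ s : Fin m, ∑ k, ∑ j, p k j * E k j s = 1 := fun s => hp_constr s.succ
  -- key sum identity
  have hsumD : ∑ k, ∑ j, p k j * D k j = 1 := by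
    have expand : ∀ k j, p k j * D k j
        = p k j + ∑ s, (ν s * (p k j * E k j s) - ν s * p k j) := by
      intro k j
      calc p k j * (1 + ∑ s, ν s * (E k j s - 1))
          = p k j + ∑ s, p k j * (ν s * (E k j s - 1)) := by
            rw [mul_add, mul_one, Finset.mul_sum]
        _ = p k j + ∑ s, (ν s * (p k j * E k j s) - ν s * p k j) :=
            congrArg _ (Finset.sum_congr rfl fun s _ => by ring)
    calc ∑ k, ∑ j, p k j * D k j
        = ∑ k, ∑ j, (p k j + ∑ s, (ν s * (p k j * E k j s) - ν s * p k j)) := by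
          exact Finset.sum_congr rfl fun k _ => Finset.sum_congr rfl fun j _ => expand k j
      _ = (∑ k, ∑ j, p k j)
          + ∑ k, ∑ j, ∑ s, (ν s * (p k j * E k j s) - ν s * p k j) := by
          rw [← Finset.sum_add_distrib]
          exact Finset.sum_congr rfl fun k _ => Finset.sum_add_distrib
      _ = 1 + ∑ s, ∑ k, ∑ j, (ν s * (p k j * E k j s) - ν s * p k j) := by
          rw [hp0]
          congr 1
          rw [show (∑ k, ∑ j, ∑ s, (ν s * (p k j * E k j s) - ν s * p k j))
              = ∑ k, ∑ s, ∑ j, (ν s * (p k j * E k j s) - ν s * p k j) from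
            Finset.sum_congr rfl fun k _ => Finset.sum_comm]
          exact Finset.sum_comm
      _ = 1 := by
          have : ∀ s : Fin m,
              ∑ k, ∑ j, (ν s * (p k j * E k j s) - ν s * p k j) = 0 := by
            intro s
            have : ∑ k, ∑ j, (ν s * (p k j * E k j s) - ν s * p k j)
                = ν s * (∑ k, ∑ j, p k j * E k j s) - ν s * (∑ k, ∑ j, p k j) := by
              rw [Finset.mul_sum, Finset.mul_sum, ← Finset.sum_sub_distrib]
              refine Finset.sum_congr rfl fun k _ => ?_
              rw [Finset.mul_sum, Finset.mul_sum, ← Finset.sum_sub_distrib]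
            rw [this, hps s, hp0]; ring
          rw [Finset.sum_congr rfl fun s _ => this s]
          simp
  -- sum of ratios equals N
  have hratio : ∑ k, ∑ j, p k j / phat k j = N := by
    calc ∑ k, ∑ j, p k j / phat k j
        = ∑ k, ∑ j, N * (p k j * D k j) := by
          exact Finset.sum_congr rfl fun k _ => Finset.sum_congr rfl fun j _ => hdiv k j
      _ = N * ∑ k, ∑ j, p k j * D k j := by
          rw [Finset.mul_sum]
          exact Finset.sum_congr rfl fun k _ => (Finset.mul_sum _ _ _).symm
      _ = N := by rw [hsumD, mul_one]
  have hones : ∑ k : Fin (m+1), ∑ _j : Fin (n k), (1 : ℝ) = N := by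
    simp [hNdef]
  -- log inequality
  have hlog : ∑ k, ∑ j, (Real.log (p k j) - Real.log (phat k j))
      ≤ ∑ k, ∑ j, (p k j / phat k j - 1) := by
    refine Finset.sum_le_sum fun k _ => Finset.sum_le_sum fun j _ => ?_
    have hpos : 0 < p k j / phat k j := div_pos (hp_pos k j) (hphat_pos k j)
    have := Real.log_le_sub_one_of_pos hpos
    rwa [Real.log_div (ne_of_gt (hp_pos k j)) (ne_of_gt (hphat_pos k j))] at this
  have hL : ∑ k, ∑ j, (Real.log (p k j) - Real.log (phat k j))
      = (∑ k, ∑ j, Real.log (p k j)) - ∑ k, ∑ j, Real.log (phat k j) := by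
    rw [← Finset.sum_sub_distrib]
    exact Finset.sum_congr rfl fun k _ => Finset.sum_sub_distrib _ _
  have hR : ∑ k, ∑ j, (p k j / phat k j - 1)
      = (∑ k, ∑ j, p k j / phat k j) - ∑ k : Fin (m+1), ∑ _j : Fin (n k), (1:ℝ) := by
    rw [← Finset.sum_sub_distrib]
    exact Finset.sum_congr rfl fun k _ => Finset.sum_sub_distrib _ _
  rw [hL, hR, hratio, hones] at hlog
  linarith
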